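/- For σ ∈ S_n, define the r-descent set rDes(σ) = {i ∈ [n-1] : σ(i) ≥ σ(i+1) + r} and the set rInv(σ) = {(i,j) : 1 ≤ i < j ≤ n, σ(i) > σ(j) > σ(i) - r}, and the r-major index rmaj(σ) = Σ_{i ∈ rDes(σ)} i + |rInv(σ)|. Define A[n,k;r] = Σ_{σ ∈ S_n, |rDes(σ)|=k} q^(rmaj(σ)). Then for r ≥ 1 and 0 ≤ k ≤ n: A[n+r, k; r] = [r]! · E_{n,k}(1, r, q), where E_{n,k}(α,β,q) is defined by E_{0,0}=1, E_{n,k} = q^(β+k-1)[n-k+α]E_{n-1,k-1} + [k+β]E_{n-1,k}. -/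

import Mathlib

open Finset

def pval {n : ℕ} (σ : Equiv.Perm (Fin n)) (i : ℕ) : ℕ :=
  if h : i < n then (σ ⟨i, h⟩ : ℕ) else 0

def desSet {n : ℕ} (σ : Equiv.Perm (Fin n)) : Finset ℕ :=
  (Finset.range (n - 1)).filter (fun i => pval σ (i + 1) < pval σ i)

def des {n : ℕ} (σ : Equiv.Perm (Fin n)) : ℕ := (desSet σ).card

def maj {n : ℕ} (σ : Equiv.Perm (Fin n)) : ℕ := ∑ i ∈ desSet σ, (i + 1)

def lrmin {n : ℕ} (σ : Equiv.Perm (Fin n)) : ℕ :=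
  ((Finset.range n).filter (fun i => ∀ j ∈ Finset.range i, pval σ i < pval σ j)).card

def rlmin {n : ℕ} (σ : Equiv.Perm (Fin n)) : ℕ :=
  ((Finset.range n).filter
    (fun i => ∀ j ∈ Finset.range n, i < j → pval σ i < pval σ j)).card

noncomputable section

abbrev K : Type := RatFunc ℚ

def qq : K := RatFunc.X

def qint (m : ℕ) : K := ∑ i ∈ Finset.range m, qq ^ i

def qfact (m : ℕ) : K := ∏ i ∈ Finset.range m, qint (i + 1)

def qbinom (a b : ℕ) : K := qfact a / (qfact b * qfact (a - b))

def E (α β : ℕ) : ℕ → ℕ → K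
  | 0, k => if k = 0 then 1 else 0
  | n + 1, 0 => qint β * E α β n 0
  | n + 1, k + 1 =>
      qq ^ (β + k) * qint (n - k + α) * E α β n k + qint (k + 1 + β) * E α β n (k + 1)

def poch (N : ℕ) : PowerSeries K :=
  ∏ i ∈ Finset.range N, (1 - PowerSeries.C (qq ^ i) * PowerSeries.X)

def rdesSet {m : ℕ} (r : ℕ) (σ : Equiv.Perm (Fin m)) : Finset ℕ :=
  (Finset.range (m - 1)).filter (fun i => pval σ (i + 1) + r ≤ pval σ i)

def rdes {m : ℕ} (r : ℕ) (σ : Equiv.Perm (Fin m)) : ℕ := (rdesSet r σ).card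

def rinv {m : ℕ} (r : ℕ) (σ : Equiv.Perm (Fin m)) : ℕ :=
  ((Finset.range m ×ˢ Finset.range m).filter
    (fun p => p.1 < p.2 ∧ pval σ p.2 < pval σ p.1 ∧ pval σ p.1 < pval σ p.2 + r)).card

def rmaj {m : ℕ} (r : ℕ) (σ : Equiv.Perm (Fin m)) : ℕ :=
  (∑ i ∈ rdesSet r σ, (i + 1)) + rinv r σ

def Aq (m k r : ℕ) : K :=
  ∑ σ ∈ (Finset.univ : Finset (Equiv.Perm (Fin m))).filter (fun σ => rdes r σ = k),
    qq ^ (rmaj r σ)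

section Ins
variable {m : ℕ}

def insFun (τ : Equiv.Perm (Fin m)) (p : Fin (m + 1)) (i : Fin (m + 1)) : Fin (m + 1) :=
  if h : (i : ℕ) < (p : ℕ) then
    (τ ⟨i, by have := p.isLt; omega⟩).castSucc
  else if h2 : (i : ℕ) = (p : ℕ) then Fin.last m
  else (τ ⟨(i : ℕ) - 1, by have := i.isLt; omega⟩).castSucc

lemma insFun_injective (τ : Equiv.Perm (Fin m)) (p : Fin (m + 1)) :
    Function.Injective (insFun τ p) := by
  have key : ∀ (a b : ℕ) (ha : a < m) (hb : b < m),
      (τ ⟨a, ha⟩).castSucc = (τ ⟨b, hb⟩).castSucc → a = b := by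
    intro a b ha hb h
    have h2 := τ.injective (Fin.castSucc_injective m h)
    exact congrArg Fin.val h2
  intro i j hij
  unfold insFun at hij
  have hi := i.isLt; have hj := j.isLt; have hp := p.isLt
  split_ifs at hij with h1 h2 h3 h4 h5 h6 h7 h8 <;>
    first
    | (exact absurd hij (Fin.castSucc_lt_last _).ne)
    | (exact absurd hij.symm (Fin.castSucc_lt_last _).ne)
    | (exact Fin.ext (by have := key _ _ _ _ hij; omega))
    | (exact Fin.ext (by omega))

def ins (τ : Equiv.Perm (Fin m)) (p : Fin (m + 1)) : Equiv.Perm (Fin (m + 1)) :=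
  Equiv.ofBijective (insFun τ p)
    ((Finite.injective_iff_bijective).mp (insFun_injective τ p))

lemma pval_ins (τ : Equiv.Perm (Fin m)) (p : Fin (m + 1)) (i : ℕ) :
    pval (ins τ p) i =
      if i < (p : ℕ) then pval τ i
      else if i = (p : ℕ) then m
      else if i ≤ m then pval τ (i - 1) else 0 := by
  have hp := p.isLt
  unfold pval
  by_cases him : i < m + 1
  · rw [dif_pos him]
    show ((insFun τ p ⟨i, him⟩ : Fin (m+1)) : ℕ) = _
    unfold insFun
    simp only []
    split_ifs with h1 h2 h3 h4 h5 <;>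
      simp_all [Fin.coe_castSucc, Fin.val_last] <;> omega
  · rw [dif_neg him]
    have h1 : ¬ i < (p:ℕ) := by omega
    have h2 : ¬ i = (p:ℕ) := by omega
    have h3 : ¬ i ≤ m := by omega
    simp [h1, h2, h3]

lemma ins_bijective :
    Function.Bijective (fun x : Equiv.Perm (Fin m) × Fin (m + 1) => ins x.1 x.2) := by
  rw [Fintype.bijective_iff_injective_and_card]
  constructor
  · rintro ⟨τ, p⟩ ⟨τ', p'⟩ h
    simp only [] at h
    have hfun : ∀ i, insFun τ p i = insFun τ' p' i := by
      intro i; exact congrArg (fun e => Equiv.toFun e i) h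
    have hpp : p = p' := by
      have h1 := hfun ⟨p, p.isLt⟩
      have h2 := hfun ⟨p', p'.isLt⟩
      unfold insFun at h1 h2
      simp only [lt_irrefl, dif_neg, dif_pos] at h1 h2
      by_cases hlt : (p:ℕ) < (p':ℕ)
      · rw [dif_pos hlt] at h1
        simp at h1
        exact absurd h1.symm (Fin.castSucc_lt_last _).ne
      · by_cases heq : (p:ℕ) = (p':ℕ)
        · exact Fin.ext heq
        · have hgt : (p':ℕ) < (p:ℕ) := by omega
          rw [dif_pos hgt] at h2
          simp at h2
    subst hpp
    refine Prod.ext ?_ rfl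
    ext a
    have hlow : ∀ (x : ℕ) (hx : x < m) , x < (p:ℕ) → τ ⟨x, hx⟩ = τ' ⟨x, hx⟩ := by
      intro x hx hxp
      have := hfun ⟨x, by omega⟩
      unfold insFun at this
      rw [dif_pos hxp, dif_pos hxp] at this
      exact Fin.castSucc_injective m this
    have hhigh : ∀ (x : ℕ) (hx : x < m), (p:ℕ) ≤ x → τ ⟨x, hx⟩ = τ' ⟨x, hx⟩ := by
      intro x hx hxp
      have := hfun ⟨x + 1, by omega⟩
      unfold insFun at this
      have c1 : ¬ ((x+1 : ℕ) < (p:ℕ)) := by omega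
      have c2 : ¬ ((x+1 : ℕ) = (p:ℕ)) := by omega
      rw [dif_neg c1, dif_neg c2, dif_neg c1, dif_neg c2] at this
      have := Fin.castSucc_injective m this
      simpa using this
    rcases lt_or_ge (a : ℕ) (p:ℕ) with hc | hc
    · exact congrArg Fin.val (by simpa using hlow a a.isLt hc)
    · exact congrArg Fin.val (by simpa using hhigh a a.isLt hc)
  · simp [Fintype.card_perm, Nat.factorial_succ, Nat.mul_comm]

end Ins
section Stats
variable {m r : ℕ}

lemma mem_rdesSet_iff {M : ℕ} (σ : Equiv.Perm (Fin M)) (i : ℕ) :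
    i ∈ rdesSet r σ ↔ i + 1 < M ∧ pval σ (i + 1) + r ≤ pval σ i := by
  simp only [rdesSet, mem_filter, mem_range]
  constructor
  · rintro ⟨h1, h2⟩; exact ⟨by omega, h2⟩
  · rintro ⟨h1, h2⟩; exact ⟨by omega, h2⟩

lemma pval_lt (τ : Equiv.Perm (Fin m)) {j : ℕ} (hj : j < m) : pval τ j < m := by
  simp only [pval, dif_pos hj]; exact (τ ⟨j, hj⟩).isLt

/-- `NewP` : inserting the max at slot `P` creates a new r-descent. -/
def NewP (r : ℕ) {m : ℕ} (τ : Equiv.Perm (Fin m)) (P : ℕ) : Prop :=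
  P < m ∧ pval τ P + r ≤ m ∧ ∀ d ∈ rdesSet r τ, d + 1 ≠ P

instance (r : ℕ) {m : ℕ} (τ : Equiv.Perm (Fin m)) (P : ℕ) : Decidable (NewP r τ P) := by
  unfold NewP; infer_instance

lemma rdesSet_ins (hr : 1 ≤ r) (τ : Equiv.Perm (Fin m)) (p : Fin (m + 1)) :
    rdesSet r (ins τ p) =
      ((rdesSet r τ).image fun d => if d + 1 < (p : ℕ) then d else d + 1) ∪
        (if NewP r τ (p : ℕ) then {(p : ℕ)} else ∅) := by
  have hp : (p : ℕ) ≤ m := Nat.lt_succ_iff.mp p.isLt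
  ext i
  rw [mem_rdesSet_iff, mem_union, mem_image]
  constructor
  · rintro ⟨him, hcond⟩
    have e1 := pval_ins τ p i
    have e2 := pval_ins τ p (i + 1)
    rcases Nat.lt_trichotomy (i + 1) (p : ℕ) with h1 | h1 | h1
    · rw [if_pos h1] at e2
      rw [if_pos (by omega)] at e1
      rw [e1, e2] at hcond
      exact Or.inl ⟨i, (mem_rdesSet_iff τ i).mpr ⟨by omega, hcond⟩, if_pos h1⟩
    · rw [if_neg (by omega), if_pos h1] at e2
      rw [if_pos (by omega)] at e1
      rw [e1, e2] at hcond
      have := pval_lt τ (show i < m by omega)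
      omega
    · rcases Nat.eq_or_lt_of_le (show (p : ℕ) ≤ i by omega) with heq | hlt
      · -- i = p
        rw [if_neg (by omega), if_neg (by omega), if_pos (by omega)] at e2
        rw [if_neg (by omega), if_pos heq.symm] at e1
        rw [e1, e2, Nat.add_sub_cancel] at hcond
        by_cases hex : ∃ d ∈ rdesSet r τ, d + 1 = (p : ℕ)
        · obtain ⟨d, hd, hdp⟩ := hex
          exact Or.inl ⟨d, hd, by rw [if_neg (by omega)]; omega⟩
        · push_neg at hex
          refine Or.inr ?_
          rw [if_pos ⟨by omega, by rw [heq]; exact hcond, hex⟩]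
          simp [heq]
      · -- i > p
        rw [if_neg (by omega), if_neg (by omega), if_pos (by omega)] at e2
        rw [if_neg (by omega), if_neg (by omega), if_pos (by omega)] at e1
        rw [e1, e2, Nat.add_sub_cancel] at hcond
        refine Or.inl ⟨i - 1, (mem_rdesSet_iff τ (i-1)).mpr ⟨by omega, ?_⟩, ?_⟩
        · rw [show i - 1 + 1 = i by omega]; exact hcond
        · rw [if_neg (by omega)]; omega
  · rintro (⟨d, hd, hφ⟩ | hsing)
    · obtain ⟨hd1, hd2⟩ := (mem_rdesSet_iff τ d).mp hd
      have hvd : pval τ d < m := pval_lt τ (by omega)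
      have hvd1 : pval τ (d + 1) < m := pval_lt τ (by omega)
      by_cases hb : d + 1 < (p : ℕ)
      · rw [if_pos hb] at hφ
        subst hφ
        have e1 := pval_ins τ p d
        have e2 := pval_ins τ p (d + 1)
        rw [if_pos (by omega)] at e1
        rw [if_pos (by omega)] at e2
        exact ⟨by omega, by rw [e1, e2]; exact hd2⟩
      · rw [if_neg hb] at hφ
        subst hφ
        refine ⟨by omega, ?_⟩
        have e1 := pval_ins τ p (d + 1)
        have e2 := pval_ins τ p (d + 1 + 1)
        rcases Nat.eq_or_lt_of_le (show (p : ℕ) ≤ d + 1 by omega) with heq | hlt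
        · rw [if_neg (by omega), if_pos heq.symm] at e1
          rw [if_neg (by omega), if_neg (by omega), if_pos (by omega)] at e2
          rw [e1, e2, Nat.add_sub_cancel]
          omega
        · rw [if_neg (by omega), if_neg (by omega), if_pos (by omega)] at e1
          rw [if_neg (by omega), if_neg (by omega), if_pos (by omega)] at e2
          rw [e1, e2, Nat.add_sub_cancel, Nat.add_sub_cancel]
          exact hd2
    · by_cases hNew : NewP r τ (p : ℕ)
      · rw [if_pos hNew, mem_singleton] at hsing
        subst hsing
        obtain ⟨hn1, hn2, _⟩ := hNew
        have e1 := pval_ins τ p (p : ℕ)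
        have e2 := pval_ins τ p ((p : ℕ) + 1)
        rw [if_neg (by omega), if_pos rfl] at e1
        rw [if_neg (by omega), if_neg (by omega), if_pos (by omega)] at e2
        rw [e2, e1, Nat.add_sub_cancel]
        exact ⟨by omega, hn2⟩
      · rw [if_neg hNew] at hsing
        exact absurd hsing (Finset.notMem_empty _)

end Stats
section Stats2
variable {m r : ℕ}

def Acount (r : ℕ) {m : ℕ} (τ : Equiv.Perm (Fin m)) (P : ℕ) : ℕ :=
  ((rdesSet r τ).filter (fun d => P ≤ d + 1)).card

def Bcount (r : ℕ) {m : ℕ} (τ : Equiv.Perm (Fin m)) (P : ℕ) : ℕ :=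
  ((Finset.range m).filter (fun j => P ≤ j ∧ m < pval τ j + r)).card

def fstat (r : ℕ) {m : ℕ} (τ : Equiv.Perm (Fin m)) (P : ℕ) : ℕ :=
  Acount r τ P + Bcount r τ P + (if NewP r τ P then P + 1 else 0)

lemma phi_injOn (τ : Equiv.Perm (Fin m)) (P : ℕ) :
    ∀ x ∈ rdesSet r τ, ∀ y ∈ rdesSet r τ,
      (if x + 1 < P then x else x + 1) = (if y + 1 < P then y else y + 1) → x = y := by
  intro x _ y _ h
  split_ifs at h <;> omega

lemma disj_ins (τ : Equiv.Perm (Fin m)) (p : Fin (m+1)) :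
    Disjoint ((rdesSet r τ).image fun d => if d + 1 < (p : ℕ) then d else d + 1)
      (if NewP r τ (p : ℕ) then {(p : ℕ)} else ∅) := by
  by_cases hNew : NewP r τ (p : ℕ)
  · rw [if_pos hNew]
    rw [Finset.disjoint_singleton_right, mem_image]
    rintro ⟨d, hd, hφ⟩
    have := hNew.2.2 d hd
    split_ifs at hφ <;> omega
  · rw [if_neg hNew]; exact Finset.disjoint_empty_right _

lemma rdes_ins (hr : 1 ≤ r) (τ : Equiv.Perm (Fin m)) (p : Fin (m + 1)) :
    rdes r (ins τ p) = rdes r τ + (if NewP r τ (p : ℕ) then 1 else 0) := by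
  unfold rdes
  rw [rdesSet_ins hr τ p, Finset.card_union_of_disjoint (disj_ins τ p),
    Finset.card_image_of_injOn (phi_injOn τ (p : ℕ))]
  split_ifs <;> simp

lemma majsum_ins (hr : 1 ≤ r) (τ : Equiv.Perm (Fin m)) (p : Fin (m + 1)) :
    ∑ i ∈ rdesSet r (ins τ p), (i + 1) =
      (∑ i ∈ rdesSet r τ, (i + 1)) + Acount r τ (p : ℕ) +
        (if NewP r τ (p : ℕ) then (p : ℕ) + 1 else 0) := by
  rw [rdesSet_ins hr τ p, Finset.sum_union (disj_ins τ p),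
    Finset.sum_image (phi_injOn τ (p : ℕ))]
  have h1 : ∑ d ∈ rdesSet r τ, ((if d + 1 < (p:ℕ) then d else d + 1) + 1) =
      ∑ d ∈ rdesSet r τ, ((d + 1) + (if (p:ℕ) ≤ d + 1 then 1 else 0)) := by
    refine Finset.sum_congr rfl fun d _ => ?_
    split_ifs <;> omega
  have h3 : ∑ x ∈ rdesSet r τ, (if (p:ℕ) ≤ x + 1 then (1:ℕ) else 0) = Acount r τ (p:ℕ) := by
    rw [Acount, Finset.card_filter]
  rw [h1, Finset.sum_add_distrib, h3]
  split_ifs <;> simp [Finset.sum_singleton]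

lemma pval_le (σ : Equiv.Perm (Fin (m + 1))) (j : ℕ) : pval σ j ≤ m := by
  unfold pval
  split
  · exact Nat.lt_succ_iff.mp (Fin.isLt _)
  · omega

lemma rinv_ins (τ : Equiv.Perm (Fin m)) (p : Fin (m + 1)) :
    rinv r (ins τ p) = rinv r τ + Bcount r τ (p : ℕ) := by
  have hp : (p : ℕ) ≤ m := Nat.lt_succ_iff.mp p.isLt
  set P := (p : ℕ) with hP
  set S := ((Finset.range (m+1) ×ˢ Finset.range (m+1)).filter
    (fun x => x.1 < x.2 ∧ pval (ins τ p) x.2 < pval (ins τ p) x.1 ∧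
      pval (ins τ p) x.1 < pval (ins τ p) x.2 + r)) with hS
  have hsplit := Finset.card_filter_add_card_filter_not
    (s := S) (p := fun x => x.1 = P)
  have hno2 : ∀ x ∈ S, x.2 ≠ P := by
    rintro ⟨a, b⟩ hx hb
    simp only [hS, Finset.mem_filter, Finset.mem_product, Finset.mem_range] at hx
    obtain ⟨⟨ha', hb'⟩, hab, h2, h3⟩ := hx
    have e := pval_ins τ p b
    rw [if_neg (by omega), if_pos hb] at e
    have := pval_le (ins τ p) a
    omega
  have hpart1 : (S.filter (fun x => ¬ x.1 = P)).card = rinv r τ := by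
    rw [rinv]
    refine Finset.card_bij'
      (fun x _ => ((if x.1 < P then x.1 else x.1 - 1), (if x.2 < P then x.2 else x.2 - 1)))
      (fun x _ => ((if x.1 < P then x.1 else x.1 + 1), (if x.2 < P then x.2 else x.2 + 1)))
      ?_ ?_ ?_ ?_
    · rintro ⟨a, b⟩ hx
      simp only [hS, Finset.mem_filter, Finset.mem_product, Finset.mem_range] at hx
      obtain ⟨⟨⟨ha', hb'⟩, hab, h2, h3⟩, hane⟩ := hx
      have hbne : b ≠ P := hno2 (a, b) (by simp only [hS, Finset.mem_filter,
        Finset.mem_product, Finset.mem_range]; exact ⟨⟨ha', hb'⟩, hab, h2, h3⟩)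
      have hva : pval (ins τ p) a = pval τ (if a < P then a else a - 1) := by
        by_cases h : a < P
        · rw [if_pos h, pval_ins, if_pos h]
        · rw [if_neg h, pval_ins, if_neg h, if_neg (by omega), if_pos (by omega)]
      have hvb : pval (ins τ p) b = pval τ (if b < P then b else b - 1) := by
        by_cases h : b < P
        · rw [if_pos h, pval_ins, if_pos h]
        · rw [if_neg h, pval_ins, if_neg h, if_neg (by omega), if_pos (by omega)]
      rw [hva] at h2 h3
      rw [hvb] at h2 h3
      simp only [Finset.mem_filter, Finset.mem_product, Finset.mem_range]
      refine ⟨⟨?_, ?_⟩, ?_, h2, h3⟩ <;> split_ifs <;> omega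
    · rintro ⟨a, b⟩ hx
      simp only [Finset.mem_filter, Finset.mem_product, Finset.mem_range] at hx
      obtain ⟨⟨ha', hb'⟩, hab, h2, h3⟩ := hx
      have hva : pval (ins τ p) (if a < P then a else a + 1) = pval τ a := by
        by_cases h : a < P
        · rw [if_pos h, pval_ins, if_pos h]
        · rw [if_neg h, pval_ins, if_neg (by omega), if_neg (by omega),
            if_pos (by omega), Nat.add_sub_cancel]
      have hvb : pval (ins τ p) (if b < P then b else b + 1) = pval τ b := by
        by_cases h : b < P
        · rw [if_pos h, pval_ins, if_pos h]
        · rw [if_neg h, pval_ins, if_neg (by omega), if_neg (by omega),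
            if_pos (by omega), Nat.add_sub_cancel]
      simp only [hS, Finset.mem_filter, Finset.mem_product, Finset.mem_range]
      rw [hva, hvb]
      refine ⟨⟨⟨?_, ?_⟩, ?_, h2, h3⟩, ?_⟩ <;> split_ifs <;> omega
    · rintro ⟨a, b⟩ hx
      simp only [hS, Finset.mem_filter, Finset.mem_product, Finset.mem_range] at hx
      obtain ⟨⟨⟨ha', hb'⟩, hab, h2, h3⟩, hane⟩ := hx
      have hbne : b ≠ P := hno2 (a, b) (by simp only [hS, Finset.mem_filter,
        Finset.mem_product, Finset.mem_range]; exact ⟨⟨ha', hb'⟩, hab, h2, h3⟩)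
      simp only [Prod.mk.injEq]
      constructor <;> (split_ifs <;> omega)
    · rintro ⟨a, b⟩ hx
      simp only [Finset.mem_filter, Finset.mem_product, Finset.mem_range] at hx
      simp only [Prod.mk.injEq]
      constructor <;> (split_ifs <;> omega)
  have hpart2 : (S.filter (fun x => x.1 = P)).card = Bcount r τ P := by
    rw [Bcount]
    refine Finset.card_bij'
      (fun x _ => x.2 - 1)
      (fun j _ => ((P : ℕ), j + 1))
      ?_ ?_ ?_ ?_
    · rintro ⟨a, b⟩ hx
      simp only [hS, Finset.mem_filter, Finset.mem_product, Finset.mem_range] at hx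
      obtain ⟨⟨⟨ha', hb'⟩, hab, h2, h3⟩, haP⟩ := hx
      subst haP
      have hbne : b ≠ P := hno2 (_, b) (by simp only [hS, Finset.mem_filter,
        Finset.mem_product, Finset.mem_range]; exact ⟨⟨ha', hb'⟩, hab, h2, h3⟩)
      have ep := pval_ins τ p P
      rw [if_neg (by omega), if_pos rfl] at ep
      have eb := pval_ins τ p b
      rw [if_neg (by omega), if_neg hbne, if_pos (by omega)] at eb
      rw [ep, eb] at h3
      simp only [Finset.mem_filter, Finset.mem_range]
      exact ⟨by omega, by omega, by omega⟩
    · intro j hj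
      simp only [Finset.mem_filter, Finset.mem_range] at hj
      obtain ⟨hjm, hPj, hbig⟩ := hj
      have ep := pval_ins τ p P
      rw [if_neg (by omega), if_pos rfl] at ep
      have ej := pval_ins τ p (j + 1)
      rw [if_neg (by omega), if_neg (by omega), if_pos (by omega), Nat.add_sub_cancel] at ej
      have := pval_lt τ hjm
      simp only [hS, Finset.mem_filter, Finset.mem_product, Finset.mem_range]
      exact ⟨⟨⟨by omega, by omega⟩, by omega, by rw [ep, ej]; omega⟩, trivial⟩
    · rintro ⟨a, b⟩ hx
      simp only [hS, Finset.mem_filter, Finset.mem_product, Finset.mem_range] at hx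
      obtain ⟨⟨⟨ha', hb'⟩, hab, h2, h3⟩, haP⟩ := hx
      simp only [Prod.mk.injEq]
      exact ⟨haP.symm, by omega⟩
    · intro j hj
      simp only [Nat.add_sub_cancel]
  rw [rinv, ← hS, ← hsplit, hpart1, hpart2]
  omega

lemma rmaj_ins (hr : 1 ≤ r) (τ : Equiv.Perm (Fin m)) (p : Fin (m + 1)) :
    rmaj r (ins τ p) = rmaj r τ + fstat r τ (p : ℕ) := by
  rw [rmaj, rmaj, majsum_ins hr τ p, rinv_ins τ p, fstat]
  ring

end Stats2
section Counting
variable {m r : ℕ}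

lemma card_filter_partition (s : Finset ℕ) (f g h : ℕ → Prop)
    [DecidablePred f] [DecidablePred g] [DecidablePred h]
    (hfg : ∀ x ∈ s, f x ↔ (g x ∨ h x)) (hdisj : ∀ x, g x → h x → False) :
    (s.filter f).card = (s.filter g).card + (s.filter h).card := by
  have e : s.filter f = s.filter g ∪ s.filter h := by
    ext x
    simp only [Finset.mem_filter, Finset.mem_union]
    constructor
    · rintro ⟨hx, hf⟩
      rcases (hfg x hx).mp hf with hg | hh
      · exact Or.inl ⟨hx, hg⟩
      · exact Or.inr ⟨hx, hh⟩
    · rintro (⟨hx, hg⟩ | ⟨hx, hh⟩)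
      · exact ⟨hx, (hfg x hx).mpr (Or.inl hg)⟩
      · exact ⟨hx, (hfg x hx).mpr (Or.inr hh)⟩
  rw [e, Finset.card_union_of_disjoint]
  rw [Finset.disjoint_left]
  intro x hx hx'
  exact hdisj x (Finset.mem_filter.mp hx).2 (Finset.mem_filter.mp hx').2

lemma pval_symm_apply (τ : Equiv.Perm (Fin m)) (x : Fin m) :
    pval τ ((τ.symm x : Fin m) : ℕ) = (x : ℕ) := by
  have h : ((τ.symm x : Fin m) : ℕ) < m := (τ.symm x).isLt
  simp only [pval, dif_pos h, Fin.eta, Equiv.apply_symm_apply]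

lemma card_filter_pval (τ : Equiv.Perm (Fin m)) (Q : ℕ → Prop) [DecidablePred Q] :
    ((Finset.range m).filter (fun j => Q (pval τ j))).card
      = ((Finset.range m).filter Q).card := by
  refine Finset.card_bij' (fun j _ => pval τ j)
    (fun v hv => ((τ.symm ⟨v, Finset.mem_range.mp (Finset.mem_filter.mp hv).1⟩ : Fin m) : ℕ))
    ?_ ?_ ?_ ?_
  · intro j hj
    obtain ⟨hj1, hj2⟩ := Finset.mem_filter.mp hj
    exact Finset.mem_filter.mpr ⟨Finset.mem_range.mpr (pval_lt τ (Finset.mem_range.mp hj1)),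
      hj2⟩
  · intro v hv
    obtain ⟨hv1, hv2⟩ := Finset.mem_filter.mp hv
    refine Finset.mem_filter.mpr ⟨Finset.mem_range.mpr (Fin.isLt _), ?_⟩
    rw [pval_symm_apply]
    exact hv2
  · intro j hj
    obtain ⟨hj1, hj2⟩ := Finset.mem_filter.mp hj
    have hjm := Finset.mem_range.mp hj1
    have e : (⟨pval τ j, pval_lt τ hjm⟩ : Fin m) = τ ⟨j, hjm⟩ := by
      apply Fin.ext
      simp [pval, dif_pos hjm]
    simp only [e, Equiv.symm_apply_apply]
  · intro v hv
    exact pval_symm_apply τ ⟨v, Finset.mem_range.mp (Finset.mem_filter.mp hv).1⟩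

/-- the set of "big value" positions -/
def bigs (r : ℕ) {m : ℕ} (τ : Equiv.Perm (Fin m)) : Finset ℕ :=
  (Finset.range m).filter (fun j => m < pval τ j + r)

def descslots (r : ℕ) {m : ℕ} (τ : Equiv.Perm (Fin m)) : Finset ℕ :=
  (rdesSet r τ).image (· + 1)

def S0 (r : ℕ) {m : ℕ} (τ : Equiv.Perm (Fin m)) : Finset ℕ :=
  (Finset.range (m + 1)).filter (fun P => ¬ NewP r τ P)

def S1 (r : ℕ) {m : ℕ} (τ : Equiv.Perm (Fin m)) : Finset ℕ :=
  (Finset.range (m + 1)).filter (fun P => NewP r τ P)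

lemma big_not_descslot (τ : Equiv.Perm (Fin m)) {j : ℕ} (hj : j ∈ bigs r τ) :
    ∀ d ∈ rdesSet r τ, d + 1 ≠ j := by
  intro d hd hdj
  obtain ⟨hd1, hd2⟩ := (mem_rdesSet_iff τ d).mp hd
  have h1 : pval τ d < m := pval_lt τ (by omega)
  obtain ⟨hj1, hj2⟩ := Finset.mem_filter.mp hj
  rw [← hdj] at hj2
  omega

lemma card_bigs (hr : 1 ≤ r) (hrm : r ≤ m) (τ : Equiv.Perm (Fin m)) :
    (bigs r τ).card = r - 1 := by
  rw [bigs, card_filter_pval τ (fun v => m < v + r)]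
  have e : (Finset.range m).filter (fun v => m < v + r) = Finset.Ico (m - r + 1) m := by
    ext v
    simp only [Finset.mem_filter, Finset.mem_range, Finset.mem_Ico]
    omega
  rw [e, Nat.card_Ico]
  omega

lemma card_descslots (τ : Equiv.Perm (Fin m)) : (descslots r τ).card = rdes r τ :=
  Finset.card_image_of_injective _ (fun a b => by omega)

lemma S0_eq (hr : 1 ≤ r) (τ : Equiv.Perm (Fin m)) :
    S0 r τ = {m} ∪ descslots r τ ∪ bigs r τ := by
  ext P
  rw [S0, Finset.mem_filter, Finset.mem_range, Finset.mem_union, Finset.mem_union]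
  constructor
  · rintro ⟨hP, hnew⟩
    by_cases hPm : P = m
    · exact Or.inl (Or.inl (Finset.mem_singleton.mpr hPm))
    · have hPm' : P < m := by omega
      by_cases hbig : m < pval τ P + r
      · exact Or.inr (Finset.mem_filter.mpr ⟨Finset.mem_range.mpr hPm', hbig⟩)
      · rw [NewP] at hnew
        push_neg at hnew
        obtain ⟨d, hd, hdP⟩ := hnew hPm' (by omega)
        exact Or.inl (Or.inr (Finset.mem_image.mpr ⟨d, hd, by omega⟩))
  · intro h
    rcases h with (hm | hds) | hbig
    · rw [Finset.mem_singleton] at hm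
      exact ⟨by omega, fun hc => by have := hc.1; omega⟩
    · rw [descslots, Finset.mem_image] at hds
      obtain ⟨d, hd, hdP⟩ := hds
      have hd' := (mem_rdesSet_iff τ d).mp hd
      exact ⟨by omega, fun hc => hc.2.2 d hd hdP⟩
    · rw [bigs, Finset.mem_filter, Finset.mem_range] at hbig
      exact ⟨by omega, fun hc => by have := hc.2.1; omega⟩

lemma disj1 (τ : Equiv.Perm (Fin m)) : Disjoint ({m} : Finset ℕ) (descslots r τ) := by
  rw [Finset.disjoint_singleton_left, descslots, Finset.mem_image]
  rintro ⟨d, hd, hdm⟩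
  obtain ⟨hd1, _⟩ := (mem_rdesSet_iff τ d).mp hd
  omega

lemma disj2 (τ : Equiv.Perm (Fin m)) : Disjoint ({m} : Finset ℕ) (bigs r τ) := by
  rw [Finset.disjoint_singleton_left, bigs, Finset.mem_filter, Finset.mem_range]
  rintro ⟨h, _⟩
  omega

lemma disj3 (τ : Equiv.Perm (Fin m)) : Disjoint (descslots r τ) (bigs r τ) := by
  rw [Finset.disjoint_left]
  rintro j hj hjb
  rw [descslots, Finset.mem_image] at hj
  obtain ⟨d, hd, hdj⟩ := hj
  exact big_not_descslot τ hjb d hd hdj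

lemma card_S0 (hr : 1 ≤ r) (hrm : r ≤ m) (τ : Equiv.Perm (Fin m)) :
    (S0 r τ).card = rdes r τ + r := by
  rw [S0_eq hr τ, Finset.card_union_of_disjoint, Finset.card_union_of_disjoint (disj1 τ),
    Finset.card_singleton, card_descslots, card_bigs hr hrm]
  · omega
  · rw [Finset.disjoint_union_left]
    exact ⟨disj2 τ, disj3 τ⟩

lemma card_S0_S1 (τ : Equiv.Perm (Fin m)) : (S1 r τ).card + (S0 r τ).card = m + 1 := by
  have := Finset.card_filter_add_card_filter_not
    (s := Finset.range (m+1)) (p := fun P => NewP r τ P)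
  rw [S1, S0]
  simpa using this

lemma card_S1 (hr : 1 ≤ r) (hrm : r ≤ m) (τ : Equiv.Perm (Fin m)) :
    (S1 r τ).card = m + 1 - (rdes r τ + r) := by
  have h1 := card_S0_S1 (r := r) τ
  rw [card_S0 hr hrm τ] at h1
  omega

lemma rdes_le (hr : 1 ≤ r) (τ : Equiv.Perm (Fin m)) : rdes r τ + r ≤ m ∨ rdes r τ = 0 := by
  by_cases h : rdes r τ = 0
  · exact Or.inr h
  · left
    have himg : (rdesSet r τ).image (fun d => pval τ d) ⊆ Finset.Ico r m := by
      intro v hv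
      rw [Finset.mem_image] at hv
      obtain ⟨d, hd, hdv⟩ := hv
      obtain ⟨hd1, hd2⟩ := (mem_rdesSet_iff τ d).mp hd
      have h1 : pval τ d < m := pval_lt τ (by omega)
      rw [Finset.mem_Ico, ← hdv]
      omega
    have hinj : ∀ x ∈ rdesSet r τ, ∀ y ∈ rdesSet r τ, pval τ x = pval τ y → x = y := by
      intro x hx y hy hxy
      obtain ⟨hx1, _⟩ := (mem_rdesSet_iff τ x).mp hx
      obtain ⟨hy1, _⟩ := (mem_rdesSet_iff τ y).mp hy
      have hx2 : x < m := by omega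
      have hy2 : y < m := by omega
      simp only [pval, dif_pos hx2, dif_pos hy2] at hxy
      have := τ.injective (Fin.ext hxy)
      exact congrArg Fin.val this
    have := Finset.card_le_card himg
    rw [Finset.card_image_of_injOn hinj, Nat.card_Ico] at this
    have hrm : r ≤ m := by
      by_contra hc
      obtain ⟨d, hd⟩ := Finset.card_pos.mp (Nat.pos_of_ne_zero h)
      obtain ⟨hd1, hd2⟩ := (mem_rdesSet_iff τ d).mp hd
      have h1 : pval τ d < m := pval_lt τ (by omega)
      omega
    rw [rdes]
    omega

end Counting
section Ranks
variable {m r : ℕ}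

lemma descslots_filter_card (τ : Equiv.Perm (Fin m)) (p : ℕ → Prop) [DecidablePred p] :
    ((descslots r τ).filter p).card = ((rdesSet r τ).filter (fun d => p (d + 1))).card := by
  have e : (descslots r τ).filter p = ((rdesSet r τ).filter (fun d => p (d + 1))).image (· + 1) := by
    ext x
    simp only [descslots, Finset.mem_filter, Finset.mem_image]
    constructor
    · rintro ⟨⟨d, hd, hdx⟩, hp⟩
      exact ⟨d, ⟨hd, by rw [hdx]; exact hp⟩, hdx⟩
    · rintro ⟨d, ⟨hd, hp⟩, hdx⟩
      exact ⟨⟨d, hd, hdx⟩, by rw [← hdx]; exact hp⟩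
  rw [e, Finset.card_image_of_injective _ (fun a b => by omega)]

lemma Bcount_eq (τ : Equiv.Perm (Fin m)) (P : ℕ) :
    Bcount r τ P = ((bigs r τ).filter (fun j => P ≤ j)).card := by
  rw [Bcount]
  congr 1
  ext j
  simp only [bigs, Finset.mem_filter, Finset.mem_range]
  tauto

lemma rank0 (hr : 1 ≤ r) (τ : Equiv.Perm (Fin m)) {P : ℕ} (hP : P ∈ S0 r τ) :
    fstat r τ P = ((S0 r τ).filter (fun q => P < q)).card := by
  obtain ⟨hPr, hPnew⟩ := Finset.mem_filter.mp hP
  rw [Finset.mem_range] at hPr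
  rw [fstat, if_neg hPnew, add_zero]
  by_cases hPm : P = m
  · have hA : Acount r τ P = 0 := by
      rw [Acount, Finset.filter_false_of_mem, Finset.card_empty]
      intro d hd
      have := (mem_rdesSet_iff τ d).mp hd
      omega
    have hB : Bcount r τ P = 0 := by
      rw [Bcount, Finset.filter_false_of_mem, Finset.card_empty]
      intro j hj
      rw [Finset.mem_range] at hj
      omega
    have hR : ((S0 r τ).filter (fun q => P < q)).card = 0 := by
      rw [Finset.filter_false_of_mem, Finset.card_empty]
      intro q hq
      have := Finset.mem_range.mp (Finset.mem_filter.mp hq).1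
      omega
    omega
  · have hPm' : P < m := by omega
    -- RHS decomposition
    rw [S0_eq hr τ, Finset.filter_union, Finset.filter_union,
      Finset.card_union_of_disjoint (by
        rw [← Finset.filter_union]
        exact Finset.disjoint_filter_filter
          (Finset.disjoint_union_left.mpr ⟨disj2 τ, disj3 τ⟩)),
      Finset.card_union_of_disjoint (Finset.disjoint_filter_filter (disj1 τ)),
      Finset.filter_singleton, if_pos hPm', Finset.card_singleton,
      descslots_filter_card τ]
    -- LHS decomposition
    have hA : Acount r τ P =
        ((rdesSet r τ).filter (fun d => d + 1 = P)).card +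
          ((rdesSet r τ).filter (fun d => P < d + 1)).card := by
      rw [Acount]
      exact card_filter_partition _ _ _ _ (fun x _ => by omega) (fun x => by omega)
    have hB : Bcount r τ P =
        ((bigs r τ).filter (fun j => j = P)).card +
          ((bigs r τ).filter (fun j => P < j)).card := by
      rw [Bcount_eq]
      exact card_filter_partition _ _ _ _ (fun x _ => by omega) (fun x => by omega)
    -- case split on why P is in S0
    have hcase : P ∈ descslots r τ ∨ P ∈ bigs r τ := by
      have := (S0_eq hr τ) ▸ hP
      rw [Finset.mem_union, Finset.mem_union, Finset.mem_singleton] at this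
      rcases this with (h | h) | h
      · omega
      · exact Or.inl h
      · exact Or.inr h
    rcases hcase with hds | hbig
    · rw [descslots, Finset.mem_image] at hds
      obtain ⟨d₀, hd₀, hd₀P⟩ := hds
      have h1 : ((rdesSet r τ).filter (fun d => d + 1 = P)) = {d₀} := by
        ext x
        simp only [Finset.mem_filter, Finset.mem_singleton]
        constructor
        · rintro ⟨hx, hx1⟩; omega
        · rintro rfl; exact ⟨hd₀, hd₀P⟩
      have h2 : ((bigs r τ).filter (fun j => j = P)).card = 0 := by
        rw [Finset.filter_false_of_mem, Finset.card_empty]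
        intro j hj hjP
        exact big_not_descslot τ (hjP ▸ hj) d₀ hd₀ hd₀P
      rw [hA, hB, h1, h2, Finset.card_singleton]
      omega
    · have h1 : ((rdesSet r τ).filter (fun d => d + 1 = P)).card = 0 := by
        rw [Finset.filter_false_of_mem, Finset.card_empty]
        intro d hd hdP
        exact big_not_descslot τ hbig d hd hdP
      have h2 : ((bigs r τ).filter (fun j => j = P)) = {P} := by
        ext x
        simp only [Finset.mem_filter, Finset.mem_singleton]
        constructor
        · rintro ⟨_, hx⟩; exact hx
        · rintro rfl; exact ⟨hbig, rfl⟩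
      rw [hA, hB, h1, h2, Finset.card_singleton]
      omega

lemma rank1 (hr : 1 ≤ r) (hrm : r ≤ m) (τ : Equiv.Perm (Fin m)) {P : ℕ} (hP : P ∈ S1 r τ) :
    fstat r τ P = (rdes r τ + r) + ((S1 r τ).filter (fun q => q < P)).card := by
  obtain ⟨hPr, hPnew⟩ := Finset.mem_filter.mp hP
  rw [Finset.mem_range] at hPr
  obtain ⟨hPm, hPsmall, hPnd⟩ := hPnew
  rw [fstat, if_pos ⟨hPm, hPsmall, hPnd⟩]
  -- c1 : split of rdesSet
  have c1 := Finset.card_filter_add_card_filter_not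
    (s := rdesSet r τ) (p := fun d => P ≤ d + 1)
  -- c2 : split of bigs
  have c2 := Finset.card_filter_add_card_filter_not
    (s := bigs r τ) (p := fun j => P ≤ j)
  rw [card_bigs hr hrm τ] at c2
  -- c3 : split of range P
  have c3 := Finset.card_filter_add_card_filter_not
    (s := (Finset.range (m+1)).filter (fun q => q < P)) (p := fun q => NewP r τ q)
  have e3 : ((Finset.range (m+1)).filter (fun q => q < P)).card = P := by
    have : (Finset.range (m+1)).filter (fun q => q < P) = Finset.range P := by
      ext q
      simp only [Finset.mem_filter, Finset.mem_range]
      omega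
    rw [this, Finset.card_range]
  rw [e3, Finset.filter_comm, Finset.filter_comm (fun q => q < P)] at c3
  have e4 : ((Finset.range (m+1)).filter (fun a => ¬ NewP r τ a)).filter (fun q => q < P)
      = (S0 r τ).filter (fun q => q < P) := rfl
  have e5 : ((Finset.range (m+1)).filter (fun a => NewP r τ a)).filter (fun q => q < P)
      = (S1 r τ).filter (fun q => q < P) := rfl
  rw [e4, e5] at c3
  -- compute S0 < P count
  have c4 : ((S0 r τ).filter (fun q => q < P)).card =
      ((rdesSet r τ).filter (fun d => ¬ P ≤ d + 1)).card +
        ((bigs r τ).filter (fun j => ¬ P ≤ j)).card := by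
    rw [S0_eq hr τ, Finset.filter_union, Finset.filter_union,
      Finset.card_union_of_disjoint (by
        rw [← Finset.filter_union]
        exact Finset.disjoint_filter_filter
          (Finset.disjoint_union_left.mpr ⟨disj2 τ, disj3 τ⟩)),
      Finset.card_union_of_disjoint (Finset.disjoint_filter_filter (disj1 τ)),
      Finset.filter_singleton, if_neg (by omega), Finset.card_empty,
      descslots_filter_card τ]
    have e6 : (rdesSet r τ).filter (fun d => d + 1 < P)
        = (rdesSet r τ).filter (fun d => ¬ P ≤ d + 1) :=
      Finset.filter_congr (fun x _ => by omega)
    have e7 : (bigs r τ).filter (fun j => j < P)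
        = (bigs r τ).filter (fun j => ¬ P ≤ j) :=
      Finset.filter_congr (fun x _ => by omega)
    rw [e6, e7]
    omega
  rw [Bcount_eq]
  rw [c4] at c3
  rw [Acount] at *
  rw [rdes] at *
  omega

lemma sum_rank_gt (S : Finset ℕ) (g : ℕ → K) (f : ℕ → ℕ)
    (hf : ∀ P ∈ S, f P = (S.filter (fun q => P < q)).card) :
    ∑ P ∈ S, g (f P) = ∑ j ∈ Finset.range S.card, g j := by
  have hinj : ∀ x ∈ S, ∀ y ∈ S, f x = f y → x = y := by
    intro x hx y hy hxy
    by_contra hne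
    rcases lt_or_gt_of_ne hne with hlt | hlt
    all_goals {
      first
      | (have key : (S.filter (fun q => y < q)) ⊂ (S.filter (fun q => x < q)) := by
          constructor
          · intro q hq
            rw [Finset.mem_filter] at hq ⊢
            exact ⟨hq.1, by omega⟩
          · intro hsub
            have hy' : y ∈ S.filter (fun q => x < q) := Finset.mem_filter.mpr ⟨hy, hlt⟩
            have := Finset.mem_filter.mp (hsub hy')
            omega)
      | (have key : (S.filter (fun q => x < q)) ⊂ (S.filter (fun q => y < q)) := by
          constructor
          · intro q hq
            rw [Finset.mem_filter] at hq ⊢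
            exact ⟨hq.1, by omega⟩
          · intro hsub
            have hy' : x ∈ S.filter (fun q => y < q) := Finset.mem_filter.mpr ⟨hx, hlt⟩
            have := Finset.mem_filter.mp (hsub hy')
            omega)
      have := Finset.card_lt_card key
      rw [← hf x hx, ← hf y hy] at this
      omega
    }
  have himg : S.image f = Finset.range S.card := by
    apply Finset.eq_of_subset_of_card_le
    · intro v hv
      rw [Finset.mem_image] at hv
      obtain ⟨P, hP, hPv⟩ := hv
      rw [Finset.mem_range, ← hPv, hf P hP]
      apply Finset.card_lt_card
      rw [Finset.filter_ssubset]
      exact ⟨P, hP, by omega⟩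
    · rw [Finset.card_range, Finset.card_image_of_injOn hinj]
  rw [← Finset.sum_image (f := g) hinj, himg]

lemma sum_rank_lt (S : Finset ℕ) (g : ℕ → K) (f : ℕ → ℕ)
    (hf : ∀ P ∈ S, f P = (S.filter (fun q => q < P)).card) :
    ∑ P ∈ S, g (f P) = ∑ j ∈ Finset.range S.card, g j := by
  have hinj : ∀ x ∈ S, ∀ y ∈ S, f x = f y → x = y := by
    intro x hx y hy hxy
    by_contra hne
    rcases lt_or_gt_of_ne hne with hlt | hlt
    all_goals {
      first
      | (have key : (S.filter (fun q => q < x)) ⊂ (S.filter (fun q => q < y)) := by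
          constructor
          · intro q hq
            rw [Finset.mem_filter] at hq ⊢
            exact ⟨hq.1, by omega⟩
          · intro hsub
            have hy' : x ∈ S.filter (fun q => q < y) := Finset.mem_filter.mpr ⟨hx, hlt⟩
            have := Finset.mem_filter.mp (hsub hy')
            omega)
      | (have key : (S.filter (fun q => q < y)) ⊂ (S.filter (fun q => q < x)) := by
          constructor
          · intro q hq
            rw [Finset.mem_filter] at hq ⊢
            exact ⟨hq.1, by omega⟩
          · intro hsub
            have hy' : y ∈ S.filter (fun q => q < x) := Finset.mem_filter.mpr ⟨hy, hlt⟩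
            have := Finset.mem_filter.mp (hsub hy')
            omega)
      have := Finset.card_lt_card key
      rw [← hf x hx, ← hf y hy] at this
      omega
    }
  have himg : S.image f = Finset.range S.card := by
    apply Finset.eq_of_subset_of_card_le
    · intro v hv
      rw [Finset.mem_image] at hv
      obtain ⟨P, hP, hPv⟩ := hv
      rw [Finset.mem_range, ← hPv, hf P hP]
      apply Finset.card_lt_card
      rw [Finset.filter_ssubset]
      exact ⟨P, hP, by omega⟩
    · rw [Finset.card_range, Finset.card_image_of_injOn hinj]
  rw [← Finset.sum_image (f := g) hinj, himg]

lemma sum_S0 (hr : 1 ≤ r) (hrm : r ≤ m) (τ : Equiv.Perm (Fin m)) :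
    ∑ P ∈ S0 r τ, qq ^ (fstat r τ P) = qint (rdes r τ + r) := by
  rw [qint, ← card_S0 hr hrm τ]
  exact sum_rank_gt _ _ _ (fun P hP => rank0 hr τ hP)

lemma sum_S1 (hr : 1 ≤ r) (hrm : r ≤ m) (τ : Equiv.Perm (Fin m)) :
    ∑ P ∈ S1 r τ, qq ^ (fstat r τ P)
      = qq ^ (rdes r τ + r) * qint (m + 1 - (rdes r τ + r)) := by
  have h2 := sum_rank_lt (S1 r τ) (fun j => qq ^ (rdes r τ + r + j))
      (fun P => ((S1 r τ).filter (fun q => q < P)).card) (fun P _ => rfl)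
  have h3 : ∑ P ∈ S1 r τ, qq ^ (fstat r τ P)
      = ∑ P ∈ S1 r τ, qq ^ (rdes r τ + r + ((S1 r τ).filter (fun q => q < P)).card) :=
    Finset.sum_congr rfl fun P hP => by rw [rank1 hr hrm τ hP]
  rw [card_S1 hr hrm τ] at h2
  rw [h3]
  refine Eq.trans h2 ?_
  rw [qint, Finset.mul_sum]
  exact Finset.sum_congr rfl fun j _ => (pow_add qq _ _)

end Ranks
section Assemble
variable {m r : ℕ}

lemma Aq_succ_master (hr : 1 ≤ r) (m k' : ℕ) :
    Aq (m+1) k' r = ∑ τ : Equiv.Perm (Fin m), qq ^ (rmaj r τ) *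
      (∑ P ∈ Finset.range (m+1),
        if rdes r τ + (if NewP r τ P then 1 else 0) = k' then qq ^ (fstat r τ P) else 0) := by
  rw [Aq, Finset.sum_filter]
  have h0 : ∑ σ : Equiv.Perm (Fin (m+1)), (if rdes r σ = k' then qq ^ (rmaj r σ) else 0)
      = ∑ x : Equiv.Perm (Fin m) × Fin (m+1),
          (if rdes r (ins x.1 x.2) = k' then qq ^ (rmaj r (ins x.1 x.2)) else 0) :=
    (ins_bijective.sum_comp _).symm
  rw [h0, Fintype.sum_prod_type]
  refine Finset.sum_congr rfl fun τ _ => ?_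
  have h1 : ∀ p : Fin (m+1),
      (if rdes r (ins τ p) = k' then qq ^ (rmaj r (ins τ p)) else 0)
      = qq ^ (rmaj r τ) * (if rdes r τ + (if NewP r τ (p:ℕ) then 1 else 0) = k'
          then qq ^ (fstat r τ (p:ℕ)) else 0) := by
    intro p
    rw [rdes_ins hr τ p, rmaj_ins hr τ p, pow_add]
    split_ifs <;> simp
  rw [Finset.sum_congr rfl (fun p _ => h1 p), ← Finset.mul_sum]
  congr 1
  exact Fin.sum_univ_eq_sum_range (fun P =>
    if rdes r τ + (if NewP r τ P then 1 else 0) = k' then qq ^ (fstat r τ P) else 0) (m+1)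

lemma G_eval (hr : 1 ≤ r) (hrm : r ≤ m) (τ : Equiv.Perm (Fin m)) (k' : ℕ) :
    (∑ P ∈ Finset.range (m+1),
      if rdes r τ + (if NewP r τ P then 1 else 0) = k' then qq ^ (fstat r τ P) else 0)
    = (if rdes r τ = k' then qint (k' + r) else 0)
      + (if rdes r τ + 1 = k' then qq ^ (rdes r τ + r) * qint (m + 1 - (rdes r τ + r)) else 0) := by
  by_cases h1 : rdes r τ = k'
  · rw [if_pos h1, if_neg (by omega), add_zero]
    have e : ∀ P ∈ Finset.range (m+1),
        (if rdes r τ + (if NewP r τ P then 1 else 0) = k' then qq ^ (fstat r τ P) else 0)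
        = (if ¬ NewP r τ P then qq ^ (fstat r τ P) else 0) := by
      intro P _
      by_cases hN : NewP r τ P
      · rw [if_pos hN, if_neg (by omega), if_neg (not_not_intro hN)]
      · rw [if_neg hN, if_pos (by omega), if_pos hN]
    rw [Finset.sum_congr rfl e, ← Finset.sum_filter]
    have := sum_S0 hr hrm τ
    rw [S0] at this
    rw [this, h1]
  · by_cases h2 : rdes r τ + 1 = k'
    · rw [if_neg h1, if_pos h2, zero_add]
      have e : ∀ P ∈ Finset.range (m+1),
          (if rdes r τ + (if NewP r τ P then 1 else 0) = k' then qq ^ (fstat r τ P) else 0)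
          = (if NewP r τ P then qq ^ (fstat r τ P) else 0) := by
        intro P _
        by_cases hN : NewP r τ P
        · rw [if_pos hN, if_pos (by omega), if_pos hN]
        · rw [if_neg hN, if_neg (by omega), if_neg hN]
      rw [Finset.sum_congr rfl e, ← Finset.sum_filter]
      have := sum_S1 hr hrm τ
      rw [S1] at this
      rw [this]
    · rw [if_neg h1, if_neg h2, add_zero]
      refine Finset.sum_eq_zero fun P _ => ?_
      rw [if_neg]
      split_ifs <;> omega

lemma Aq_rec_zero (hr : 1 ≤ r) (hrm : r ≤ m) : Aq (m+1) 0 r = qint r * Aq m 0 r := by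
  rw [Aq_succ_master hr m 0, Aq, Finset.sum_filter, Finset.mul_sum]
  refine Finset.sum_congr rfl fun τ _ => ?_
  rw [G_eval hr hrm τ 0]
  by_cases h : rdes r τ = 0
  · rw [if_pos h, if_neg (by omega), if_pos h, Nat.zero_add]
    ring
  · rw [if_neg h, if_neg (by omega), if_neg h]
    ring

lemma Aq_rec_succ (hr : 1 ≤ r) (hrm : r ≤ m) (k : ℕ) :
    Aq (m+1) (k+1) r = qint (k+1+r) * Aq m (k+1) r
      + qq ^ (k+r) * qint (m + 1 - (k + r)) * Aq m k r := by
  rw [Aq_succ_master hr m (k+1), Aq, Aq, Finset.sum_filter, Finset.sum_filter,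
    Finset.mul_sum, Finset.mul_sum, ← Finset.sum_add_distrib]
  refine Finset.sum_congr rfl fun τ _ => ?_
  rw [G_eval hr hrm τ (k+1)]
  by_cases h1 : rdes r τ = k + 1
  · rw [if_pos h1, if_neg (by omega), if_pos h1, if_neg (by omega)]
    ring
  · by_cases h2 : rdes r τ = k
    · rw [if_neg h1, if_pos (by omega), if_neg h1, if_pos h2, h2]
      ring
    · rw [if_neg h1, if_neg (by omega), if_neg h1, if_neg h2]
      ring

lemma rdes_zero_of_le (hmr : m ≤ r) (τ : Equiv.Perm (Fin m)) : rdes r τ = 0 := by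
  rw [rdes, Finset.card_eq_zero, Finset.eq_empty_iff_forall_notMem]
  intro i hi
  obtain ⟨h1, h2⟩ := (mem_rdesSet_iff τ i).mp hi
  have := pval_lt τ (show i < m by omega)
  omega

lemma rdesSet_empty_of_le (hmr : m ≤ r) (τ : Equiv.Perm (Fin m)) : rdesSet r τ = ∅ :=
  Finset.card_eq_zero.mp (rdes_zero_of_le hmr τ)

lemma Aq_zero_of_big (hr : 1 ≤ r) (m k : ℕ) (hk1 : 1 ≤ k) (hk : m < k + r) :
    Aq m k r = 0 := by
  rw [Aq, Finset.filter_false_of_mem, Finset.sum_empty]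
  intro τ _ hc
  rcases rdes_le hr τ with h | h
  · rw [hc] at h; omega
  · rw [hc] at h; omega

lemma E_zero_of_gt (α β : ℕ) : ∀ n k, n < k → E α β n k = 0 := by
  intro n
  induction n with
  | zero =>
    intro k hk
    rw [E]
    rw [if_neg (by omega)]
  | succ n IH =>
    intro k hk
    match k, hk with
    | k + 1, hk =>
      rw [E, IH k (by omega), IH (k+1) (by omega)]
      ring

lemma Aq_rec_base (hr : 1 ≤ r) (hmr : m + 1 ≤ r) : Aq (m+1) 0 r = qint (m+1) * Aq m 0 r := by
  rw [Aq_succ_master hr m 0, Aq, Finset.sum_filter, Finset.mul_sum]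
  have key : ∑ P ∈ Finset.range (m+1), qq ^ (m - P) = qint (m+1) := by
    rw [qint, ← Finset.sum_range_reflect (fun j => qq ^ j) (m+1)]
    exact Finset.sum_congr rfl fun j _ => by congr 1 <;> omega
  refine Finset.sum_congr rfl fun τ _ => ?_
  have hrd : rdes r τ = 0 := rdes_zero_of_le (by omega) τ
  have hN : ∀ P, ¬ NewP r τ P := by
    intro P hNew
    have h2 := hNew.2.1
    omega
  have hfs : ∀ P ∈ Finset.range (m+1), fstat r τ P = m - P := by
    intro P hP
    rw [fstat, if_neg (hN P), add_zero, Acount, rdesSet_empty_of_le (by omega) τ,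
      Finset.filter_empty, Finset.card_empty, Bcount]
    have e : (Finset.range m).filter (fun j => P ≤ j ∧ m < pval τ j + r) = Finset.Ico P m := by
      ext j
      simp only [Finset.mem_filter, Finset.mem_range, Finset.mem_Ico]
      constructor
      · rintro ⟨h1, h2, _⟩; exact ⟨h2, h1⟩
      · rintro ⟨h1, h2⟩; exact ⟨h2, h1, by omega⟩
    rw [e, Nat.card_Ico]
    omega
  have e2 : ∀ P ∈ Finset.range (m+1),
      (if rdes r τ + (if NewP r τ P then 1 else 0) = 0 then qq ^ (fstat r τ P) else 0)
      = qq ^ (m - P) := by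
    intro P hP
    rw [if_neg (hN P), hrd, if_pos (by omega), hfs P hP]
  rw [Finset.sum_congr rfl e2, key, if_pos hrd]
  ring

end Assemble
section Main
variable {r : ℕ}

lemma Aq_zero_zero (r : ℕ) : Aq 0 0 r = 1 := by
  have h : (Finset.univ : Finset (Equiv.Perm (Fin 0))).filter (fun σ => rdes r σ = 0)
      = Finset.univ :=
    Finset.filter_true_of_mem (fun σ _ => rdes_zero_of_le (by omega) σ)
  rw [Aq, h]
  have h2 : ∀ σ : Equiv.Perm (Fin 0), rmaj r σ = 0 := by
    intro σ
    rw [rmaj, rdesSet_empty_of_le (by omega) σ, Finset.sum_empty, rinv]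
    simp
  simp [h2]

lemma Aq_base (r : ℕ) (hr : 1 ≤ r) : ∀ m, m ≤ r → Aq m 0 r = qfact m := by
  intro m
  induction m with
  | zero =>
    intro _
    rw [Aq_zero_zero, qfact, Finset.range_zero, Finset.prod_empty]
  | succ m IH =>
    intro hmr
    rw [Aq_rec_base hr hmr, IH (by omega), qfact, qfact, Finset.prod_range_succ]
    ring

lemma main_aux (hr : 1 ≤ r) : ∀ n k, Aq (n + r) k r = qfact r * E 1 r n k := by
  intro n
  induction n with
  | zero =>
    intro k
    cases k with
    | zero =>
      rw [Nat.zero_add, Aq_base r hr r (le_refl r),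
        show E 1 r 0 0 = 1 from by rw [E]; rw [if_pos rfl]]
      ring
    | succ k =>
      rw [Nat.zero_add, Aq_zero_of_big hr r (k+1) (by omega) (by omega),
        E_zero_of_gt 1 r 0 (k+1) (by omega)]
      ring
  | succ n IH =>
    intro k
    have hrm : r ≤ n + r := by omega
    cases k with
    | zero =>
      rw [show n + 1 + r = (n + r) + 1 by omega, Aq_rec_zero hr hrm, IH 0,
        show E 1 r (n+1) 0 = qint r * E 1 r n 0 from by rw [E]]
      ring
    | succ k =>
      by_cases hk : k ≤ n
      · rw [show n + 1 + r = (n + r) + 1 by omega, Aq_rec_succ hr hrm k, IH (k+1), IH k,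
          show n + r + 1 - (k + r) = n - k + 1 by omega,
          show E 1 r (n+1) (k+1) = qq ^ (r + k) * qint (n - k + 1) * E 1 r n k
            + qint (k + 1 + r) * E 1 r n (k+1) from by rw [E],
          show k + r = r + k by omega]
        ring
      · rw [Aq_zero_of_big hr (n+1+r) (k+1) (by omega) (by omega),
          E_zero_of_gt 1 r (n+1) (k+1) (by omega)]
        ring

end Main

theorem Aq_eq_qfact_mul_E (r n k : ℕ) (hr : 1 ≤ r) (hk : k ≤ n) :
    Aq (n + r) k r = qfact r * E 1 r n k :=
  main_aux hr n k
end
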